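/- Let G be a finite connected weighted graph with N ≥ 3 vertices and let (τ_{ij}) be its coalescence times. Then the strict inequalities τ^{(1)} + τ^{(2)} > τ^{(3)} and τ^{(2)} + τ^{(3)} > τ^{(1)} hold; consequently the structure coefficient σ = (−τ^{(1)} + τ^{(2)} + τ^{(3)})/(τ^{(1)} + τ^{(2)} − τ^{(3)}) is well defined and positive, and τ^{(2)} > |τ^{(3)} − τ^{(1)}| (so that whenever τ^{(3)} ≠ τ^{(1)}, the critical benefit-to-cost ratio (b/c)* = τ^{(2)}/(τ^{(3)} − τ^{(1)}) satisfies |(b/c)*| > 1). -/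

import Mathlib

open Finset Filter Asymptotics

noncomputable section

namespace EvoGraph

variable {V : Type*} [Fintype V] [DecidableEq V]

/-- Weighted degree `w_i = ∑_j w_{ij}`. -/
def deg (w : V → V → ℝ) (i : V) : ℝ := ∑ j, w i j

/-- Total edge weight `W = ∑_i w_i`. -/
def Wtot (w : V → V → ℝ) : ℝ := ∑ i, deg w i

/-- Random-walk step probability `p_{ij} = w_{ij}/w_i`. -/
def step (w : V → V → ℝ) (i j : V) : ℝ := w i j / deg w i

/-- The stochastic matrix `(p_{ij})`. -/
def stepMat (w : V → V → ℝ) : Matrix V V ℝ := Matrix.of fun i j => step w i j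

/-- `n`-step probability `p^{(n)}_{ij}`: the `(i,j)` entry of the `n`-th power of `(p_{ij})`. -/
def stepN (w : V → V → ℝ) (n : ℕ) (i j : V) : ℝ := (stepMat w ^ n) i j

/-- Stationary distribution `π_i = w_i / W`. -/
def statDist (w : V → V → ℝ) (i : V) : ℝ := deg w i / Wtot w

/-- `w` is a finite connected weighted graph: symmetric nonnegative weights
(self-loops allowed), positive weighted degrees, and any two vertices joined by
a path of edges of positive weight. -/
def IsWeightedGraph (w : V → V → ℝ) : Prop :=
  (∀ i j, w i j = w j i) ∧ (∀ i j, 0 ≤ w i j) ∧ (∀ i, 0 < deg w i) ∧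
  ∀ i j : V, Relation.ReflTransGen (fun a b => 0 < w a b) i j

/-- `τ` is the (symmetric) solution of the coalescence-time system:
`τ_{ii} = 0`, and `τ_{ij} = 1 + (1/2) ∑_k (p_{ik} τ_{kj} + p_{jk} τ_{ik})` for `i ≠ j`. -/
def IsCoalescent (w : V → V → ℝ) (τ : V → V → ℝ) : Prop :=
  (∀ i j, τ i j = τ j i) ∧ (∀ i, τ i i = 0) ∧
  ∀ i j, i ≠ j →
    τ i j = 1 + (1 / 2) * ∑ k, (step w i k * τ k j + step w j k * τ i k)

/-- `τ^{(n)} = ∑_{i,j} π_i p^{(n)}_{ij} τ_{ij}`. -/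
def tauWalk (w τ : V → V → ℝ) (n : ℕ) : ℝ :=
  ∑ i, ∑ j, statDist w i * stepN w n i j * τ i j

/-- Remeeting time `τ⁺_i = 1 + ∑_j p_{ij} τ_{ij}`. -/
def remeet (w τ : V → V → ℝ) (i : V) : ℝ := 1 + ∑ j, step w i j * τ i j


set_option linter.unusedSectionVars false
set_option linter.unusedVariables false

section Aux

variable {w τ : V → V → ℝ}

lemma deg_pos (hG : IsWeightedGraph w) (i : V) : 0 < deg w i := hG.2.2.1 i

lemma Wtot_pos [Nonempty V] (hG : IsWeightedGraph w) : 0 < Wtot w :=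
  Finset.sum_pos (fun i _ => deg_pos hG i) Finset.univ_nonempty

lemma statDist_pos [Nonempty V] (hG : IsWeightedGraph w) (i : V) : 0 < statDist w i :=
  div_pos (deg_pos hG i) (Wtot_pos hG)

lemma statDist_sum [Nonempty V] (hG : IsWeightedGraph w) : ∑ i, statDist w i = 1 := by
  have h := (Wtot_pos hG).ne'
  simp only [statDist, ← Finset.sum_div]
  exact div_self h

lemma step_nonneg (hG : IsWeightedGraph w) (i j : V) : 0 ≤ step w i j :=
  div_nonneg (hG.2.1 i j) (deg_pos hG i).le

lemma step_le_one (hG : IsWeightedGraph w) (i j : V) : step w i j ≤ 1 := by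
  rw [step, div_le_one (deg_pos hG i)]
  exact Finset.single_le_sum (f := fun k => w i k) (fun k _ => hG.2.1 i k) (Finset.mem_univ j)

lemma step_row_sum (hG : IsWeightedGraph w) (i : V) : ∑ k, step w i k = 1 := by
  simp only [step, ← Finset.sum_div]
  exact div_self (deg_pos hG i).ne'

lemma statDist_mul_step [Nonempty V] (hG : IsWeightedGraph w) (i k : V) :
    statDist w i * step w i k = statDist w k * step w k i := by
  have h1 := (deg_pos hG i).ne'
  have h2 := (deg_pos hG k).ne'
  have h3 := (Wtot_pos hG).ne'
  have hsym := hG.1 i k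
  simp only [statDist, step]
  field_simp
  linear_combination hsym

lemma statDist_col_sum [Nonempty V] (hG : IsWeightedGraph w) (k : V) :
    ∑ i, statDist w i * step w i k = statDist w k := by
  calc ∑ i, statDist w i * step w i k = ∑ i, statDist w k * step w k i :=
        Finset.sum_congr rfl fun i _ => statDist_mul_step hG i k
    _ = statDist w k * ∑ i, step w k i := (Finset.mul_sum _ _ _).symm
    _ = statDist w k := by rw [step_row_sum hG, mul_one]

lemma stepN_zero (i j : V) : stepN w 0 i j = if i = j then 1 else 0 := by
  simp [stepN, Matrix.one_apply]

lemma stepN_one (i j : V) : stepN w 1 i j = step w i j := by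
  simp [stepN, stepMat]

lemma stepN_succ (n : ℕ) (i j : V) :
    stepN w (n + 1) i j = ∑ k, step w i k * stepN w n k j := by
  simp [stepN, pow_succ', Matrix.mul_apply, stepMat]

lemma stepN_succ' (n : ℕ) (i j : V) :
    stepN w (n + 1) i j = ∑ k, stepN w n i k * step w k j := by
  simp [stepN, pow_succ, Matrix.mul_apply, stepMat]

lemma stepN_row_sum (hG : IsWeightedGraph w) : ∀ (n : ℕ) (i : V), ∑ j, stepN w n i j = 1
  | 0, i => by simp [stepN_zero]
  | n + 1, i => by
    simp only [stepN_succ]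
    rw [Finset.sum_comm]
    calc ∑ k, ∑ j, step w i k * stepN w n k j
        = ∑ k, step w i k * ∑ j, stepN w n k j :=
          Finset.sum_congr rfl fun k _ => (Finset.mul_sum _ _ _).symm
      _ = ∑ k, step w i k := by
          refine Finset.sum_congr rfl fun k _ => ?_
          rw [stepN_row_sum hG n k, mul_one]
      _ = 1 := step_row_sum hG i

lemma stepN_rev [Nonempty V] (hG : IsWeightedGraph w) :
    ∀ (n : ℕ) (i j : V), statDist w i * stepN w n i j = statDist w j * stepN w n j i
  | 0, i, j => by
    rw [stepN_zero, stepN_zero]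
    by_cases h : i = j
    · subst h; rfl
    · simp [h, Ne.symm h]
  | n + 1, i, j => by
    rw [stepN_succ', stepN_succ, Finset.mul_sum, Finset.mul_sum]
    refine Finset.sum_congr rfl fun k _ => ?_
    have h1 := stepN_rev hG n i k
    have h2 := statDist_mul_step hG k j
    calc statDist w i * (stepN w n i k * step w k j)
        = (statDist w i * stepN w n i k) * step w k j := by ring
      _ = (statDist w k * stepN w n k i) * step w k j := by rw [h1]
      _ = (statDist w k * step w k j) * stepN w n k i := by ring
      _ = (statDist w j * step w j k) * stepN w n k i := by rw [h2]
      _ = statDist w j * (step w j k * stepN w n k i) := by ring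

lemma tau_nonneg [Nonempty V] (hG : IsWeightedGraph w) (hτ : IsCoalescent w τ) (a b : V) :
    0 ≤ τ a b := by
  obtain ⟨⟨i, j⟩, -, hmin⟩ := Finset.exists_min_image (Finset.univ ×ˢ Finset.univ)
    (fun p : V × V => τ p.1 p.2) (by simp [Finset.univ_nonempty])
  have hmin' : ∀ x y : V, τ i j ≤ τ x y := fun x y => hmin (x, y) (by simp)
  by_cases hij : i = j
  · subst hij
    have h0 : τ i i = 0 := hτ.2.1 i
    have := hmin' a b
    linarith
  · exfalso
    have hrec := hτ.2.2 i j hij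
    have h1 : ∀ k, step w i k * τ i j ≤ step w i k * τ k j :=
      fun k => mul_le_mul_of_nonneg_left (hmin' k j) (step_nonneg hG i k)
    have h2 : ∀ k, step w j k * τ i j ≤ step w j k * τ i k :=
      fun k => mul_le_mul_of_nonneg_left (hmin' i k) (step_nonneg hG j k)
    have hge : τ i j + τ i j ≤ ∑ k, (step w i k * τ k j + step w j k * τ i k) := by
      have : ∑ k, (step w i k * τ i j + step w j k * τ i j)
          ≤ ∑ k, (step w i k * τ k j + step w j k * τ i k) :=
        Finset.sum_le_sum fun k _ => add_le_add (h1 k) (h2 k)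
      calc τ i j + τ i j = (∑ k, step w i k) * τ i j + (∑ k, step w j k) * τ i j := by
            rw [step_row_sum hG i, step_row_sum hG j, one_mul]
        _ = ∑ k, (step w i k * τ i j + step w j k * τ i j) := by
            rw [Finset.sum_add_distrib, Finset.sum_mul, Finset.sum_mul]
        _ ≤ _ := this
    linarith

lemma one_le_remeet [Nonempty V] (hG : IsWeightedGraph w) (hτ : IsCoalescent w τ) (i : V) :
    1 ≤ remeet w τ i := by
  have h : 0 ≤ ∑ j, step w i j * τ i j :=
    Finset.sum_nonneg fun j _ => mul_nonneg (step_nonneg hG i j) (tau_nonneg hG hτ i j)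
  rw [remeet]; linarith

lemma tau_rec_all (hG : IsWeightedGraph w) (hτ : IsCoalescent w τ) (i j : V) :
    τ i j = 1 + (1 / 2) * (∑ k, (step w i k * τ k j + step w j k * τ i k))
        - (if i = j then remeet w τ i else 0) := by
  by_cases h : i = j
  · subst h
    rw [if_pos rfl, hτ.2.1 i, remeet]
    have hc : ∀ k ∈ Finset.univ, step w i k * τ k i + step w i k * τ i k
        = 2 * (step w i k * τ i k) := fun k _ => by rw [hτ.1 k i]; ring
    rw [Finset.sum_congr rfl hc, ← Finset.mul_sum]
    ring
  · rw [if_neg h, hτ.2.2 i j h]; ring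


lemma tauWalk_zero (hτ : IsCoalescent w τ) : tauWalk w τ 0 = 0 := by
  rw [tauWalk]
  refine Finset.sum_eq_zero fun i _ => ?_
  refine Finset.sum_eq_zero fun j _ => ?_
  rw [stepN_zero]
  by_cases h : i = j
  · subst h; rw [hτ.2.1 i, mul_zero]
  · rw [if_neg h, mul_zero, zero_mul]

lemma half_pull (c : V → V → ℝ) (g : V → V → V → ℝ) :
    (∑ i : V, ∑ j : V, (1 / 2) * (c i j * ∑ k : V, g i j k))
      = (1 / 2) * ∑ i : V, ∑ j : V, ∑ k : V, c i j * g i j k := by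
  rw [Finset.mul_sum]
  refine Finset.sum_congr rfl fun i _ => ?_
  rw [Finset.mul_sum]
  refine Finset.sum_congr rfl fun j _ => ?_
  rw [Finset.mul_sum]

/-- Kac-type identity: `∑ π_i² τ⁺_i = 1`. -/
lemma kac [Nonempty V] (hG : IsWeightedGraph w) (hτ : IsCoalescent w τ) :
    ∑ i, (statDist w i) ^ 2 * remeet w τ i = 1 := by
  set π := statDist w with hπdef
  set R := ∑ i : V, ∑ j : V, π i * π j * τ i j with hR
  have expand : R
      = (∑ i : V, ∑ j : V, π i * π j)
        + ((∑ i : V, ∑ j : V, (1 / 2) * (π i * π j * ∑ k : V, step w i k * τ k j))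
          + (∑ i : V, ∑ j : V, (1 / 2) * (π i * π j * ∑ k : V, step w j k * τ i k)))
        - (∑ i : V, ∑ j : V, (if i = j then π i * π j * remeet w τ i else 0)) := by
    rw [hR]
    simp only [← Finset.sum_add_distrib, ← Finset.sum_sub_distrib]
    refine Finset.sum_congr rfl fun i _ => Finset.sum_congr rfl fun j _ => ?_
    by_cases h : i = j
    · subst h
      rw [if_pos rfl, tau_rec_all hG hτ i i, Finset.sum_add_distrib, if_pos rfl]; ring
    · rw [if_neg h, tau_rec_all hG hτ i j, Finset.sum_add_distrib, if_neg h]; ring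
  have pieceA : ∑ i : V, ∑ j : V, π i * π j = 1 := by
    rw [← Finset.sum_mul_sum, statDist_sum hG, one_mul]
  have pieceC : ∑ i : V, ∑ j : V, (if i = j then π i * π j * remeet w τ i else 0)
      = ∑ i, (π i) ^ 2 * remeet w τ i := by
    refine Finset.sum_congr rfl fun i _ => ?_
    rw [Finset.sum_ite_eq Finset.univ i (fun j => π i * π j * remeet w τ i),
      if_pos (Finset.mem_univ i)]
    ring
  have pieceB1 : (∑ i : V, ∑ j : V, (1 / 2) * (π i * π j * ∑ k : V, step w i k * τ k j))
      = (1 / 2) * R := by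
    rw [half_pull]
    congr 1
    rw [Finset.sum_comm]
    calc ∑ j : V, ∑ i : V, ∑ k : V, π i * π j * (step w i k * τ k j)
        = ∑ j : V, ∑ k : V, ∑ i : V, π i * π j * (step w i k * τ k j) :=
          Finset.sum_congr rfl fun j _ => Finset.sum_comm
      _ = ∑ j : V, ∑ k : V, π k * π j * τ k j := by
          refine Finset.sum_congr rfl fun j _ => Finset.sum_congr rfl fun k _ => ?_
          calc ∑ i : V, π i * π j * (step w i k * τ k j)
              = (∑ i : V, π i * step w i k) * (π j * τ k j) := by
                rw [Finset.sum_mul]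
                exact Finset.sum_congr rfl fun i _ => by ring
            _ = π k * (π j * τ k j) := by rw [statDist_col_sum hG]
            _ = π k * π j * τ k j := by ring
      _ = R := by rw [hR]; exact Finset.sum_comm
  have pieceB2 : (∑ i : V, ∑ j : V, (1 / 2) * (π i * π j * ∑ k : V, step w j k * τ i k))
      = (1 / 2) * R := by
    rw [half_pull]
    congr 1
    calc ∑ i : V, ∑ j : V, ∑ k : V, π i * π j * (step w j k * τ i k)
        = ∑ i : V, ∑ k : V, ∑ j : V, π i * π j * (step w j k * τ i k) :=
          Finset.sum_congr rfl fun i _ => Finset.sum_comm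
      _ = ∑ i : V, ∑ k : V, π i * π k * τ i k := by
          refine Finset.sum_congr rfl fun i _ => Finset.sum_congr rfl fun k _ => ?_
          calc ∑ j : V, π i * π j * (step w j k * τ i k)
              = (∑ j : V, π j * step w j k) * (π i * τ i k) := by
                rw [Finset.sum_mul]
                exact Finset.sum_congr rfl fun j _ => by ring
            _ = π k * (π i * τ i k) := by rw [statDist_col_sum hG]
            _ = π i * π k * τ i k := by ring
      _ = R := by rw [hR]
  rw [pieceA, pieceB1, pieceB2, pieceC] at expand
  linarith

/-- Telescoping identity. -/
lemma telescope [Nonempty V] (hG : IsWeightedGraph w) (hτ : IsCoalescent w τ) (n : ℕ) :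
    tauWalk w τ n
      = 1 + tauWalk w τ (n + 1) - ∑ i, statDist w i * stepN w n i i * remeet w τ i := by
  set π := statDist w with hπdef
  have expand : tauWalk w τ n
      = (∑ i : V, ∑ j : V, π i * stepN w n i j)
        + ((∑ i : V, ∑ j : V, (1 / 2) * (π i * stepN w n i j * ∑ k : V, step w i k * τ k j))
          + (∑ i : V, ∑ j : V, (1 / 2) * (π i * stepN w n i j * ∑ k : V, step w j k * τ i k)))
        - (∑ i : V, ∑ j : V, (if i = j then π i * stepN w n i j * remeet w τ i else 0)) := by
    rw [tauWalk]
    simp only [← Finset.sum_add_distrib, ← Finset.sum_sub_distrib]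
    refine Finset.sum_congr rfl fun i _ => Finset.sum_congr rfl fun j _ => ?_
    by_cases h : i = j
    · subst h
      rw [if_pos rfl, tau_rec_all hG hτ i i, Finset.sum_add_distrib, if_pos rfl]; ring
    · rw [if_neg h, tau_rec_all hG hτ i j, Finset.sum_add_distrib, if_neg h]; ring
  have pieceA : ∑ i : V, ∑ j : V, π i * stepN w n i j = 1 := by
    calc ∑ i : V, ∑ j : V, π i * stepN w n i j
        = ∑ i : V, π i * ∑ j : V, stepN w n i j :=
          Finset.sum_congr rfl fun i _ => (Finset.mul_sum _ _ _).symm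
      _ = ∑ i : V, π i := by
          refine Finset.sum_congr rfl fun i _ => ?_
          rw [stepN_row_sum hG n i, mul_one]
      _ = 1 := statDist_sum hG
  have pieceC : ∑ i : V, ∑ j : V, (if i = j then π i * stepN w n i j * remeet w τ i else 0)
      = ∑ i, π i * stepN w n i i * remeet w τ i := by
    refine Finset.sum_congr rfl fun i _ => ?_
    rw [Finset.sum_ite_eq Finset.univ i (fun j => π i * stepN w n i j * remeet w τ i),
      if_pos (Finset.mem_univ i)]
  have pieceB1 : (∑ i : V, ∑ j : V, (1 / 2) * (π i * stepN w n i j * ∑ k : V, step w i k * τ k j))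
      = (1 / 2) * tauWalk w τ (n + 1) := by
    rw [half_pull]
    congr 1
    rw [tauWalk, Finset.sum_comm]
    calc ∑ j : V, ∑ i : V, ∑ k : V, π i * stepN w n i j * (step w i k * τ k j)
        = ∑ j : V, ∑ k : V, ∑ i : V, π i * stepN w n i j * (step w i k * τ k j) :=
          Finset.sum_congr rfl fun j _ => Finset.sum_comm
      _ = ∑ j : V, ∑ k : V, π k * stepN w (n + 1) k j * τ k j := by
          refine Finset.sum_congr rfl fun j _ => Finset.sum_congr rfl fun k _ => ?_
          calc ∑ i : V, π i * stepN w n i j * (step w i k * τ k j)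
              = ∑ i : V, (π i * step w i k) * stepN w n i j * τ k j :=
                Finset.sum_congr rfl fun i _ => by ring
            _ = ∑ i : V, (π k * step w k i) * stepN w n i j * τ k j :=
                Finset.sum_congr rfl fun i _ => by rw [statDist_mul_step hG i k]
            _ = π k * (∑ i : V, step w k i * stepN w n i j) * τ k j := by
                rw [Finset.mul_sum, Finset.sum_mul]
                exact Finset.sum_congr rfl fun i _ => by ring
            _ = π k * stepN w (n + 1) k j * τ k j := by rw [← stepN_succ]
      _ = ∑ k : V, ∑ j : V, π k * stepN w (n + 1) k j * τ k j := Finset.sum_comm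
  have pieceB2 : (∑ i : V, ∑ j : V, (1 / 2) * (π i * stepN w n i j * ∑ k : V, step w j k * τ i k))
      = (1 / 2) * tauWalk w τ (n + 1) := by
    rw [half_pull]
    congr 1
    rw [tauWalk]
    calc ∑ i : V, ∑ j : V, ∑ k : V, π i * stepN w n i j * (step w j k * τ i k)
        = ∑ i : V, ∑ k : V, ∑ j : V, π i * stepN w n i j * (step w j k * τ i k) :=
          Finset.sum_congr rfl fun i _ => Finset.sum_comm
      _ = ∑ i : V, ∑ k : V, π i * stepN w (n + 1) i k * τ i k := by
          refine Finset.sum_congr rfl fun i _ => Finset.sum_congr rfl fun k _ => ?_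
          calc ∑ j : V, π i * stepN w n i j * (step w j k * τ i k)
              = π i * (∑ j : V, stepN w n i j * step w j k) * τ i k := by
                rw [Finset.mul_sum, Finset.sum_mul]
                exact Finset.sum_congr rfl fun j _ => by ring
            _ = π i * stepN w (n + 1) i k * τ i k := by rw [← stepN_succ']
  rw [pieceA, pieceB1, pieceB2, pieceC] at expand
  linarith


/-- There is an edge `(a,b)` with `p_ab > 0` and `p_ba < 1`. -/
lemma exists_bad (hG : IsWeightedGraph w) (hN : 3 ≤ Fintype.card V) :
    ∃ a b : V, 0 < step w a b ∧ step w b a < 1 := by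
  by_contra hcon
  push_neg at hcon
  -- hcon : ∀ a b, 0 < step w a b → 1 ≤ step w b a
  have hzero : ∀ a b : V, 0 < w a b → ∀ l, l ≠ a → w b l = 0 := by
    intro a b hab l hl
    have hpab : 0 < step w a b := div_pos hab (deg_pos hG a)
    have h1 : 1 ≤ step w b a := hcon a b hpab
    have h2 : deg w b ≤ w b a := by
      rw [step, le_div_iff₀ (deg_pos hG b), one_mul] at h1
      exact h1
    have h3 : w b a + w b l ≤ deg w b := by
      have hsub : ({a, l} : Finset V) ⊆ Finset.univ := Finset.subset_univ _
      have := Finset.sum_le_sum_of_subset_of_nonneg hsub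
        (fun k _ _ => hG.2.1 b k)
      rwa [Finset.sum_pair (Ne.symm hl)] at this
    have h4 : 0 ≤ w b l := hG.2.1 b l
    linarith
  have hne : Nonempty V := by
    have : 0 < Fintype.card V := by omega
    exact Fintype.card_pos_iff.mp this
  obtain ⟨a⟩ := hne
  have ⟨b, hb⟩ : ∃ b, 0 < w a b := by
    by_contra hno
    push_neg at hno
    have : deg w a ≤ 0 := Finset.sum_nonpos fun j _ => hno j
    exact absurd (deg_pos hG a) (by linarith)
  -- closure of {a, b}
  have hba : 0 < w b a := by rw [← hG.1 a b]; exact hb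
  have hcl : ∀ x : V, (x = a ∨ x = b) → ∀ y, 0 < w x y → (y = a ∨ y = b) := by
    intro x hx y hy
    rcases hx with rfl | rfl
    · by_contra hy2
      push_neg at hy2
      have := hzero b x hba y hy2.2
      exact absurd hy (by rw [this]; exact lt_irrefl 0)
    · by_contra hy2
      push_neg at hy2
      have := hzero a x hb y hy2.1
      exact absurd hy (by rw [this]; exact lt_irrefl 0)
  have hreach : ∀ z : V, Relation.ReflTransGen (fun p q => 0 < w p q) a z → (z = a ∨ z = b) := by
    intro z hz
    induction hz with
    | refl => exact Or.inl rfl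
    | tail _ hstep ih => exact hcl _ ih _ hstep
  -- pick c outside {a, b}
  have hcard : (({a, b} : Finset V)).card < Fintype.card V := by
    have : ({a, b} : Finset V).card ≤ 2 := Finset.card_insert_le a {b} |>.trans (by simp)
    omega
  obtain ⟨c, hc⟩ : ∃ c : V, c ∉ ({a, b} : Finset V) := by
    have h1 : (Finset.univ \ ({a, b} : Finset V)).Nonempty := by
      rw [← Finset.card_pos, Finset.card_sdiff_of_subset (Finset.subset_univ _), Finset.card_univ]
      omega
    obtain ⟨c, hc⟩ := h1
    exact ⟨c, (Finset.mem_sdiff.mp hc).2⟩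
  simp only [Finset.mem_insert, Finset.mem_singleton] at hc
  push_neg at hc
  rcases hreach c (hG.2.2.2 a c) with h | h
  · exact hc.1 h
  · exact hc.2 h

/-- Some row of `I + P` is not proportional to `π` (needs `N ≥ 3`). -/
lemma exists_q [Nonempty V] (hG : IsWeightedGraph w) (hN : 3 ≤ Fintype.card V) :
    ∃ i k : V, ((if i = k then (1 : ℝ) else 0) + step w i k) ≠ 2 * statDist w k := by
  by_contra hcon
  push_neg at hcon
  have hhalf : ∀ i : V, (1 : ℝ) / 2 ≤ statDist w i := by
    intro i
    have := hcon i i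
    rw [if_pos rfl] at this
    have h0 := step_nonneg hG i i
    linarith
  obtain ⟨t, hts, htc⟩ := Finset.exists_subset_card_eq (s := (Finset.univ : Finset V)) (n := 3)
    (by rw [Finset.card_univ]; exact hN)
  have h1 : (3 : ℝ) / 2 ≤ ∑ i ∈ t, statDist w i := by
    calc (3 : ℝ) / 2 = ∑ _i ∈ t, (1 : ℝ) / 2 := by
          rw [Finset.sum_const, htc]; norm_num
      _ ≤ ∑ i ∈ t, statDist w i := Finset.sum_le_sum fun i _ => hhalf i
  have h2 : ∑ i ∈ t, statDist w i ≤ ∑ i, statDist w i :=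
    Finset.sum_le_sum_of_subset_of_nonneg hts fun i _ _ => (statDist_pos hG i).le
  rw [statDist_sum hG] at h2
  linarith

/-- Per-vertex sum-of-squares identity. -/
lemma sos_identity [Nonempty V] (hG : IsWeightedGraph w) (i : V) :
    (statDist w i) ^ 2 *
        (∑ k, ((if i = k then (1 : ℝ) else 0) + step w i k - 2 * statDist w k) ^ 2 / statDist w k)
      = statDist w i * (1 + 2 * step w i i + ∑ k, step w i k * step w k i)
        - 4 * (statDist w i) ^ 2 := by
  set π := statDist w with hπdef
  have hπpos : ∀ k : V, (0:ℝ) < π k := fun k => statDist_pos hG k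
  have per_k : ∀ k : V, ((if i = k then (1 : ℝ) else 0) + step w i k - 2 * π k) ^ 2 / π k
      = ((if i = k then (1 : ℝ) else 0) + step w i k) ^ 2 / π k
        - 4 * ((if i = k then (1 : ℝ) else 0) + step w i k) + 4 * π k := by
    intro k
    have h := (hπpos k).ne'
    field_simp
    ring
  have hsq : ∀ k : V, ((if i = k then (1 : ℝ) else 0) + step w i k) ^ 2 / π k
      = (step w i k * step w k i) / π i
        + (if i = k then (1 + 2 * step w i i) / π i else 0) := by
    intro k
    have hik : (step w i k) ^ 2 / π k = (step w i k * step w k i) / π i := by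
      rw [div_eq_div_iff (hπpos k).ne' (hπpos i).ne']
      have h := statDist_mul_step hG i k
      linear_combination step w i k * h
    by_cases h : i = k
    · subst h
      rw [if_pos rfl, if_pos rfl, ← hik]
      have hp := (hπpos i).ne'
      field_simp
      ring
    · rw [if_neg h, if_neg h, zero_add, add_zero, hik]
  have hsum_q : ∑ k : V, ((if i = k then (1 : ℝ) else 0) + step w i k) = 2 := by
    rw [Finset.sum_add_distrib, step_row_sum hG i,
      Finset.sum_ite_eq Finset.univ i (fun _ => (1:ℝ)), if_pos (Finset.mem_univ i)]
    norm_num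
  have hsum_sq : ∑ k : V, ((if i = k then (1 : ℝ) else 0) + step w i k) ^ 2 / π k
      = (∑ k, step w i k * step w k i) / π i + (1 + 2 * step w i i) / π i := by
    rw [Finset.sum_congr rfl fun k _ => hsq k, Finset.sum_add_distrib,
      Finset.sum_ite_eq Finset.univ i (fun _ => (1 + 2 * step w i i) / π i),
      if_pos (Finset.mem_univ i), ← Finset.sum_div]
  have expand : ∑ k : V, ((if i = k then (1 : ℝ) else 0) + step w i k - 2 * π k) ^ 2 / π k
      = ((∑ k, step w i k * step w k i) / π i + (1 + 2 * step w i i) / π i)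
        - 4 * 2 + 4 * 1 := by
    rw [Finset.sum_congr rfl fun k _ => per_k k]
    rw [Finset.sum_add_distrib, Finset.sum_sub_distrib, ← Finset.mul_sum, ← Finset.mul_sum,
      hsum_q, hsum_sq, statDist_sum hG]
  rw [expand]
  have hp := (hπpos i).ne'
  field_simp
  ring


end Aux

theorem sigma_pos_and_bc_gt_one (w : V → V → ℝ) (hG : IsWeightedGraph w)
    (hN : 3 ≤ Fintype.card V) (τ : V → V → ℝ) (hτ : IsCoalescent w τ) :
    tauWalk w τ 3 < tauWalk w τ 1 + tauWalk w τ 2 ∧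
    tauWalk w τ 1 < tauWalk w τ 2 + tauWalk w τ 3 ∧
    0 < (-tauWalk w τ 1 + tauWalk w τ 2 + tauWalk w τ 3) /
        (tauWalk w τ 1 + tauWalk w τ 2 - tauWalk w τ 3) ∧
    |tauWalk w τ 3 - tauWalk w τ 1| < tauWalk w τ 2 ∧
    (tauWalk w τ 3 ≠ tauWalk w τ 1 →
      1 < |tauWalk w τ 2 / (tauWalk w τ 3 - tauWalk w τ 1)|) := by
  haveI : Nonempty V := Fintype.card_pos_iff.mp (by omega)
  set π := statDist w with hπdef
  set f := remeet w τ with hfdef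
  -- the three A-values
  set A0 := ∑ i, π i * f i with hA0
  set A1 := ∑ i, π i * step w i i * f i with hA1
  set A2 := ∑ i, π i * (∑ k, step w i k * step w k i) * f i with hA2
  -- telescoping
  have t0 := telescope hG hτ 0
  have t1 := telescope hG hτ 1
  have t2 := telescope hG hτ 2
  rw [tauWalk_zero hτ] at t0
  norm_num at t0 t1 t2
  have s0 : ∑ i, π i * stepN w 0 i i * f i = A0 := by
    refine Finset.sum_congr rfl fun i _ => ?_
    rw [stepN_zero, if_pos rfl, mul_one]
  have s1 : ∑ i, π i * stepN w 1 i i * f i = A1 := by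
    refine Finset.sum_congr rfl fun i _ => ?_
    rw [stepN_one]
  have s2 : ∑ i, π i * stepN w 2 i i * f i = A2 := by
    refine Finset.sum_congr rfl fun i _ => ?_
    have h2 : stepN w 2 i i = ∑ k, step w i k * stepN w 1 k i := by
      have := stepN_succ (w := w) 1 i i
      norm_num at this
      exact this
    rw [h2, Finset.sum_congr rfl fun k _ => by rw [stepN_one]]
  rw [s0] at t0; rw [s1] at t1; rw [s2] at t2
  -- t0 : 0 = 1 + tauWalk 1 - A0 ; t1 : tauWalk 1 = 1 + tauWalk 2 - A1 ; etc.
  have hτ1 : tauWalk w τ 1 = A0 - 1 := by linarith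
  have hτ2 : tauWalk w τ 2 = A0 + A1 - 2 := by linarith
  have hτ3 : tauWalk w τ 3 = A0 + A1 + A2 - 3 := by linarith
  have hKac : ∑ i, (π i) ^ 2 * f i = 1 := kac hG hτ
  -- positivity ingredients
  have hfpos : ∀ i, (0:ℝ) < f i := fun i => lt_of_lt_of_le one_pos (one_le_remeet hG hτ i)
  have hπpos : ∀ i, (0:ℝ) < π i := fun i => statDist_pos hG i
  -- D1 : A0 - A2 > 0
  have hD1 : 0 < A0 - A2 := by
    have hrepr : A0 - A2 = ∑ i, π i * f i * (1 - ∑ k, step w i k * step w k i) := by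
      rw [hA0, hA2, ← Finset.sum_sub_distrib]
      exact Finset.sum_congr rfl fun i _ => by ring
    rw [hrepr]
    obtain ⟨a, b, hab, hba⟩ := exists_bad hG hN
    have hle : ∀ i : V, ∑ k, step w i k * step w k i ≤ 1 := by
      intro i
      calc ∑ k, step w i k * step w k i ≤ ∑ k, step w i k :=
            Finset.sum_le_sum fun k _ =>
              mul_le_of_le_one_right (step_nonneg hG i k) (step_le_one hG k i)
        _ = 1 := step_row_sum hG i
    refine Finset.sum_pos' (fun i _ => ?_) ⟨a, Finset.mem_univ a, ?_⟩
    · exact mul_nonneg (mul_nonneg (hπpos i).le (hfpos i).le) (by linarith [hle i])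
    · have hlt : ∑ k, step w a k * step w k a < 1 := by
        have : ∑ k, step w a k * step w k a < ∑ k, step w a k := by
          refine Finset.sum_lt_sum (fun k _ =>
            mul_le_of_le_one_right (step_nonneg hG a k) (step_le_one hG k a))
            ⟨b, Finset.mem_univ b, ?_⟩
          exact mul_lt_of_lt_one_right hab hba
        rwa [step_row_sum hG a] at this
      exact mul_pos (mul_pos (hπpos a) (hfpos a)) (by linarith)
  -- D2 : A0 + 2*A1 + A2 - 4 > 0
  have hD2 : 0 < A0 + 2 * A1 + A2 - 4 := by
    have hrepr : A0 + 2 * A1 + A2 - 4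
        = ∑ i, f i * ((π i) ^ 2 *
            (∑ k, ((if i = k then (1 : ℝ) else 0) + step w i k - 2 * π k) ^ 2 / π k)) := by
      have h4 : (4:ℝ) = 4 * ∑ i, (π i) ^ 2 * f i := by rw [hKac]; ring
      rw [h4, hA0, hA1, hA2, Finset.mul_sum, Finset.mul_sum, ← Finset.sum_add_distrib,
        ← Finset.sum_add_distrib, ← Finset.sum_sub_distrib]
      refine Finset.sum_congr rfl fun i _ => ?_
      rw [sos_identity hG i]
      ring
    rw [hrepr]
    obtain ⟨i0, k0, hne⟩ := exists_q hG hN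
    have hterm : ∀ i k : V,
        (0:ℝ) ≤ ((if i = k then (1 : ℝ) else 0) + step w i k - 2 * π k) ^ 2 / π k :=
      fun i k => div_nonneg (sq_nonneg _) (hπpos k).le
    refine Finset.sum_pos' (fun i _ => ?_) ⟨i0, Finset.mem_univ i0, ?_⟩
    · exact mul_nonneg (hfpos i).le
        (mul_nonneg (sq_nonneg _) (Finset.sum_nonneg fun k _ => hterm i k))
    · refine mul_pos (hfpos i0) (mul_pos (pow_pos (hπpos i0) 2) ?_)
      refine Finset.sum_pos' (fun k _ => hterm i0 k) ⟨k0, Finset.mem_univ k0, ?_⟩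
      have hne' : ((if i0 = k0 then (1 : ℝ) else 0) + step w i0 k0 - 2 * π k0) ≠ 0 :=
        sub_ne_zero.mpr hne
      have hsq : 0 < ((if i0 = k0 then (1 : ℝ) else 0) + step w i0 k0 - 2 * π k0) ^ 2 :=
        lt_of_le_of_ne (sq_nonneg _) (Ne.symm (pow_ne_zero 2 hne'))
      exact div_pos hsq (hπpos k0)
  -- combine
  have htri1 : tauWalk w τ 3 < tauWalk w τ 1 + tauWalk w τ 2 := by
    rw [hτ1, hτ2, hτ3]; linarith
  have htri2 : tauWalk w τ 1 < tauWalk w τ 2 + tauWalk w τ 3 := by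
    rw [hτ1, hτ2, hτ3]; linarith
  refine ⟨htri1, htri2, ?_, ?_, ?_⟩
  · exact div_pos (by linarith) (by linarith)
  · rw [abs_sub_lt_iff]
    constructor <;> linarith
  · intro hne
    have habs : |tauWalk w τ 3 - tauWalk w τ 1| < tauWalk w τ 2 := by
      rw [abs_sub_lt_iff]; constructor <;> linarith
    rw [abs_div, lt_div_iff₀ (abs_pos.mpr (sub_ne_zero.mpr hne)), one_mul]
    exact lt_of_lt_of_le habs (le_abs_self _)
  done


end EvoGraph
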